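/- For the swallowtail constrained equation, if (x,a,b,c) ∈ B (i.e., x⁴ + ax² + bx + c = 0 and 4x³ + 2ax + b = 0), and a < 0 with x² < −a/2, then the point (−x − √(−2x² − a), a, b, c) also lies in the constraint manifold S_V; i.e., the finite jump (x,a,b,c) ↦ (−x − √(−2x²−a), a, b, c) lands on S_V. -/
import Mathlib


/-- For the swallowtail constrained equation, if `(x,a,b,c) ∈ B` and `a < 0` with
`x² < −a/2`, then the finite jump target `(−x − √(−2x² − a), a, b, c)` lies on `S_V`. -/
theorem swallowtail_finite_jump (x a b c : ℝ)
    (h1 : x^4 + a*x^2 + b*x + c = 0)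
    (h2 : 4*x^3 + 2*a*x + b = 0)
    (ha : a < 0) (hx : x^2 < -a/2) :
    (-x - Real.sqrt (-2*x^2 - a))^4 + a*(-x - Real.sqrt (-2*x^2 - a))^2 +
      b*(-x - Real.sqrt (-2*x^2 - a)) + c = 0 := by
  have hpos : (0:ℝ) ≤ -2*x^2 - a := by nlinarith
  set s := Real.sqrt (-2*x^2 - a) with hsdef
  have hs : s^2 = -2*x^2 - a := Real.sq_sqrt hpos
  linear_combination h1 - (2*x + s)*h2 + (s^2 + 4*x*s + 4*x^2)*hs
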